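/- Let i : ℕ → {0,1} be a sequence containing infinitely many zeros and infinitely many ones. Then the diameters of the nested barycentric triangles for the triple (e,(12),(12)) tend to zero: diam(Γ_{(e,12,12)}(i₁,…,iₙ)) → 0 as n → ∞. In particular the intersection over all n of these triangles is a single point. -/

import Mathlib

open Matrix MeasureTheory Filter

noncomputable section

/-- A point of ℝ² with the Euclidean metric. -/
def euclPt (x y : ℝ) : EuclideanSpace ℝ (Fin 2) :=
  (WithLp.equiv 2 (Fin 2 → ℝ)).symm ![x, y]

/-- Projection π(a,b,c) = (b/a, c/a), landing in Euclidean ℝ². -/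
def projE (v : Fin 3 → ℝ) : EuclideanSpace ℝ (Fin 2) := euclPt (v 1 / v 0) (v 2 / v 0)

def Vmat : Matrix (Fin 3) (Fin 3) ℝ := !![1,1,1; 0,1,1; 0,0,1]

def prodSeq (C : Fin 2 → Matrix (Fin 3) (Fin 3) ℝ) (i : ℕ → Fin 2) :
    ℕ → Matrix (Fin 3) (Fin 3) ℝ
  | 0 => 1
  | n + 1 => prodSeq C i n * C (i (n + 1))

/-- The subtriangle: convex hull of the π-images of the columns of V·C_{i₁}⋯C_{iₙ}. -/
def subTriE (C : Fin 2 → Matrix (Fin 3) (Fin 3) ℝ) (i : ℕ → Fin 2) (n : ℕ) :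
    Set (EuclideanSpace ℝ (Fin 2)) :=
  convexHull ℝ (Set.range fun j : Fin 3 => projE fun k => (Vmat * prodSeq C i n) k j)

/-- The pair of barycentric matrices for this TRIP triple. -/
def Ge1212 : Fin 2 → Matrix (Fin 3) (Fin 3) ℝ :=
  ![!![0,0,1/2; 0,1,0; 1,0,1/2], !![0,1,1/2; 1,0,0; 0,0,1/2]]

namespace Stmt8Aux

def M (i : ℕ → Fin 2) (n : ℕ) : Matrix (Fin 3) (Fin 3) ℝ := Vmat * prodSeq Ge1212 i n

lemma M_succ (i : ℕ → Fin 2) (n : ℕ) : M i (n+1) = M i n * Ge1212 (i (n+1)) := by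
  simp [M, prodSeq, Matrix.mul_assoc]

lemma M_row0 (i : ℕ → Fin 2) (n : ℕ) (j : Fin 3) : M i n 0 j = 1 := by
  induction n generalizing j with
  | zero =>
    have h : M i 0 = Vmat := by simp [M, prodSeq]
    rw [h]
    fin_cases j <;> simp [Vmat]
  | succ n ih =>
    rw [M_succ, Matrix.mul_apply, Fin.sum_univ_three, ih, ih, ih]
    obtain ⟨x, hx⟩ : ∃ x, i (n+1) = x := ⟨_, rfl⟩
    fin_cases x <;> rw [hx] <;> fin_cases j <;> norm_num [Ge1212, Matrix.vecHead, Matrix.vecTail, Matrix.cons_val_two]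

def q (i : ℕ → Fin 2) (n : ℕ) (j : Fin 3) : EuclideanSpace ℝ (Fin 2) :=
  euclPt (M i n 1 j) (M i n 2 j)

lemma subTri_eq (i : ℕ → Fin 2) (n : ℕ) :
    subTriE Ge1212 i n = convexHull ℝ (Set.range (q i n)) := by
  unfold subTriE
  congr 1
  have : (fun j : Fin 3 => projE fun k => (Vmat * prodSeq Ge1212 i n) k j) = q i n := by
    funext j
    show projE (fun k => M i n k j) = q i n j
    simp [projE, q, M_row0]
  rw [this]

lemma midpoint_euclPt (a b c d : ℝ) :
    midpoint ℝ (euclPt a b) (euclPt c d) = euclPt ((a+c)/2) ((b+d)/2) := by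
  ext k
  simp only [euclPt, midpoint_eq_smul_add, PiLp.smul_apply,
    PiLp.add_apply, smul_eq_mul]
  fin_cases k <;> simp <;> ring


lemma M_step0 (i : ℕ → Fin 2) (n : ℕ) (h : i (n+1) = 0) (k : Fin 3) :
    M i (n+1) k 0 = M i n k 2 ∧ M i (n+1) k 1 = M i n k 1 ∧
      M i (n+1) k 2 = (M i n k 0 + M i n k 2) / 2 := by
  refine ⟨?_, ?_, ?_⟩ <;>
    rw [M_succ, h, Matrix.mul_apply, Fin.sum_univ_three] <;>
    norm_num [Ge1212, Matrix.vecHead, Matrix.vecTail, Matrix.cons_val_two] <;> ring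

lemma M_step1 (i : ℕ → Fin 2) (n : ℕ) (h : i (n+1) = 1) (k : Fin 3) :
    M i (n+1) k 0 = M i n k 1 ∧ M i (n+1) k 1 = M i n k 0 ∧
      M i (n+1) k 2 = (M i n k 0 + M i n k 2) / 2 := by
  refine ⟨?_, ?_, ?_⟩ <;>
    rw [M_succ, h, Matrix.mul_apply, Fin.sum_univ_three] <;>
    norm_num [Ge1212, Matrix.vecHead, Matrix.vecTail, Matrix.cons_val_two] <;> ring

lemma q_step0 (i : ℕ → Fin 2) (n : ℕ) (h : i (n+1) = 0) :
    q i (n+1) 0 = q i n 2 ∧ q i (n+1) 1 = q i n 1 ∧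
      q i (n+1) 2 = midpoint ℝ (q i n 0) (q i n 2) := by
  refine ⟨?_, ?_, ?_⟩ <;> unfold q
  · rw [(M_step0 i n h 1).1, (M_step0 i n h 2).1]
  · rw [(M_step0 i n h 1).2.1, (M_step0 i n h 2).2.1]
  · rw [(M_step0 i n h 1).2.2, (M_step0 i n h 2).2.2, midpoint_euclPt]

lemma q_step1 (i : ℕ → Fin 2) (n : ℕ) (h : i (n+1) = 1) :
    q i (n+1) 0 = q i n 1 ∧ q i (n+1) 1 = q i n 0 ∧
      q i (n+1) 2 = midpoint ℝ (q i n 0) (q i n 2) := by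
  refine ⟨?_, ?_, ?_⟩ <;> unfold q
  · rw [(M_step1 i n h 1).1, (M_step1 i n h 2).1]
  · rw [(M_step1 i n h 1).2.1, (M_step1 i n h 2).2.1]
  · rw [(M_step1 i n h 1).2.2, (M_step1 i n h 2).2.2, midpoint_euclPt]

lemma subset_succ (i : ℕ → Fin 2) (n : ℕ) :
    subTriE Ge1212 i (n+1) ⊆ subTriE Ge1212 i n := by
  rw [subTri_eq, subTri_eq]
  refine convexHull_min ?_ (convex_convexHull ℝ _)
  rintro _ ⟨j, rfl⟩
  have hmem : ∀ j, q i n j ∈ convexHull ℝ (Set.range (q i n)) :=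
    fun j => subset_convexHull ℝ _ ⟨j, rfl⟩
  have hmid : midpoint ℝ (q i n 0) (q i n 2) ∈ convexHull ℝ (Set.range (q i n)) :=
    (convex_convexHull ℝ _).segment_subset (hmem 0) (hmem 2)
      (midpoint_mem_segment _ _)
  obtain ⟨x, hx⟩ : ∃ x, i (n+1) = x := ⟨_, rfl⟩
  fin_cases x
  · obtain ⟨e0, e1, e2⟩ := q_step0 i n hx
    fin_cases j
    · show q i (n+1) 0 ∈ _; rw [e0]; exact hmem 2
    · show q i (n+1) 1 ∈ _; rw [e1]; exact hmem 1
    · show q i (n+1) 2 ∈ _; rw [e2]; exact hmid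
  · obtain ⟨e0, e1, e2⟩ := q_step1 i n hx
    fin_cases j
    · show q i (n+1) 0 ∈ _; rw [e0]; exact hmem 1
    · show q i (n+1) 1 ∈ _; rw [e1]; exact hmem 0
    · show q i (n+1) 2 ∈ _; rw [e2]; exact hmid

lemma isCompact_subTri (i : ℕ → Fin 2) (n : ℕ) : IsCompact (subTriE Ge1212 i n) := by
  rw [subTri_eq]; exact (Set.finite_range _).isCompact_convexHull ℝ

lemma nonempty_subTri (i : ℕ → Fin 2) (n : ℕ) : (subTriE Ge1212 i n).Nonempty := by
  rw [subTri_eq]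
  exact ⟨q i n 0, subset_convexHull ℝ _ ⟨0, rfl⟩⟩

lemma q_mem (i : ℕ → Fin 2) (n : ℕ) (j : Fin 3) : q i n j ∈ subTriE Ge1212 i n := by
  rw [subTri_eq]; exact subset_convexHull ℝ _ ⟨j, rfl⟩

lemma dist_mid_le {x y z : EuclideanSpace ℝ (Fin 2)} :
    dist x (midpoint ℝ y z) ≤ (dist x y + dist x z) / 2 := by
  calc dist x (midpoint ℝ y z) = dist (midpoint ℝ x x) (midpoint ℝ y z) := by
        rw [midpoint_self]
    _ ≤ (dist x y + dist x z) / 2 := dist_midpoint_midpoint_le _ _ _ _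

lemma contract (i : ℕ → Fin 2) (n : ℕ) (h1 : i (n+1) = 1) (h0 : i (n+2) = 0) :
    Metric.diam (subTriE Ge1212 i (n+2)) ≤ 3/4 * Metric.diam (subTriE Ge1212 i n) := by
  set d := Metric.diam (subTriE Ge1212 i n) with hdef
  have hd : 0 ≤ d := Metric.diam_nonneg
  have hb : Bornology.IsBounded (subTriE Ge1212 i n) := (isCompact_subTri i n).isBounded
  have hdist : ∀ j k : Fin 3, dist (q i n j) (q i n k) ≤ d := fun j k =>
    Metric.dist_le_diam_of_mem hb (q_mem i n j) (q_mem i n k)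
  obtain ⟨a0, a1, a2⟩ := q_step1 i n h1
  obtain ⟨b0, b1, b2⟩ := q_step0 i (n+1) h0
  set u := q i n 0
  set v := q i n 1
  set w := q i n 2
  set m := midpoint ℝ u w with hm
  have e0 : q i (n+2) 0 = m := by rw [b0, a2]
  have e1 : q i (n+2) 1 = u := by rw [b1, a1]
  have e2 : q i (n+2) 2 = midpoint ℝ v m := by rw [b2, a0, a2]
  have hum : dist u m ≤ d / 2 := by
    have := dist_mid_le (x := u) (y := u) (z := w)
    have h' : dist u u = 0 := dist_self u
    have := hdist 0 2
    rw [hm]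
    calc dist u (midpoint ℝ u w) ≤ (dist u u + dist u w) / 2 := dist_mid_le
      _ ≤ d / 2 := by rw [dist_self]; linarith [hdist 0 2]
  have hvm : dist v m ≤ d := by
    rw [hm]
    calc dist v (midpoint ℝ u w) ≤ (dist v u + dist v w) / 2 := dist_mid_le
      _ ≤ d := by linarith [hdist 1 0, hdist 1 2]
  have humid : dist u (midpoint ℝ v m) ≤ 3/4 * d := by
    calc dist u (midpoint ℝ v m) ≤ (dist u v + dist u m) / 2 := dist_mid_le
      _ ≤ 3/4 * d := by linarith [hdist 0 1]
  have hmmid : dist m (midpoint ℝ v m) ≤ 3/4 * d := by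
    calc dist m (midpoint ℝ v m) ≤ (dist m v + dist m m) / 2 := dist_mid_le
      _ ≤ 3/4 * d := by rw [dist_self, dist_comm]; linarith
  have hum' : dist m u ≤ 3/4 * d := by rw [dist_comm]; linarith
  rw [subTri_eq, convexHull_diam]
  apply Metric.diam_le_of_forall_dist_le (by linarith)
  rintro _ ⟨j, rfl⟩ _ ⟨k, rfl⟩
  fin_cases j <;> fin_cases k
  · show dist (q i (n+2) 0) (q i (n+2) 0) ≤ _; rw [dist_self]; linarith
  · show dist (q i (n+2) 0) (q i (n+2) 1) ≤ _; rw [e0, e1]; exact hum'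
  · show dist (q i (n+2) 0) (q i (n+2) 2) ≤ _; rw [e0, e2]; exact hmmid
  · show dist (q i (n+2) 1) (q i (n+2) 0) ≤ _; rw [e1, e0, dist_comm]; exact hum'
  · show dist (q i (n+2) 1) (q i (n+2) 1) ≤ _; rw [dist_self]; linarith
  · show dist (q i (n+2) 1) (q i (n+2) 2) ≤ _; rw [e1, e2]; exact humid
  · show dist (q i (n+2) 2) (q i (n+2) 0) ≤ _; rw [e2, e0, dist_comm]; exact hmmid
  · show dist (q i (n+2) 2) (q i (n+2) 1) ≤ _; rw [e2, e1, dist_comm]; exact humid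
  · show dist (q i (n+2) 2) (q i (n+2) 2) ≤ _; rw [dist_self]; linarith

lemma exists_pattern (i : ℕ → Fin 2)
    (h0 : {n : ℕ | i n = 0}.Infinite) (h1 : {n : ℕ | i n = 1}.Infinite) (N : ℕ) :
    ∃ n, N ≤ n ∧ i (n+1) = 1 ∧ i (n+2) = 0 := by
  obtain ⟨m, hm1, hmN⟩ := h1.exists_gt N
  have hne : {k : ℕ | m < k ∧ i k = 0}.Nonempty := by
    obtain ⟨k, hk0, hkm⟩ := h0.exists_gt m
    exact ⟨k, hkm, hk0⟩
  set k0 := sInf {k : ℕ | m < k ∧ i k = 0} with hk0def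
  have hk0 : m < k0 ∧ i k0 = 0 := Nat.sInf_mem hne
  have hk1 : i (k0 - 1) = 1 := by
    rcases eq_or_lt_of_le (Nat.succ_le_of_lt hk0.1) with h | h
    · have : k0 - 1 = m := by omega
      rw [this]; exact hm1
    · have hlt : k0 - 1 < k0 := by omega
      have hnot : k0 - 1 ∉ {k : ℕ | m < k ∧ i k = 0} := Nat.notMem_of_lt_sInf hlt
      have hne0 : i (k0 - 1) ≠ 0 := by
        intro hc
        exact hnot ⟨by omega, hc⟩
      have := (i (k0 - 1)).isLt
      have hv : (i (k0 - 1)).val ≠ 0 := fun hc => hne0 (Fin.ext hc)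
      have : (i (k0 - 1)).val = 1 := by omega
      exact Fin.ext this
  refine ⟨k0 - 2, by omega, ?_, ?_⟩
  · have : k0 - 2 + 1 = k0 - 1 := by omega
    rw [this]; exact hk1
  · have : k0 - 2 + 2 = k0 := by omega
    rw [this]; exact hk0.2

end Stmt8Aux

/-- If the sequence contains infinitely many zeros and infinitely many ones, the diameters of the nested barycentric triangles of (e,12,12) tend to zero; in particular the intersection is a single point. -/
theorem stmt8 (i : ℕ → Fin 2)
    (h0 : {n : ℕ | i n = 0}.Infinite) (h1 : {n : ℕ | i n = 1}.Infinite) :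
    Tendsto (fun n => Metric.diam (subTriE Ge1212 i n)) atTop (nhds 0) ∧
    ∃ pt : EuclideanSpace ℝ (Fin 2), (⋂ n : ℕ, subTriE Ge1212 i (n + 1)) = {pt} := by
  have hsub : ∀ n, subTriE Ge1212 i (n+1) ⊆ subTriE Ge1212 i n :=
    fun n => Stmt8Aux.subset_succ i n
  set a : ℕ → ℝ := fun n => Metric.diam (subTriE Ge1212 i n) with ha
  have hanti : Antitone a := antitone_nat_of_succ_le fun n =>
    Metric.diam_mono (hsub n) (Stmt8Aux.isCompact_subTri i n).isBounded
  have hnn : ∀ n, 0 ≤ a n := fun n => Metric.diam_nonneg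
  have hbdd : BddBelow (Set.range a) := ⟨0, by rintro _ ⟨n, rfl⟩; exact hnn n⟩
  have htend : Tendsto a atTop (nhds (⨅ n, a n)) := tendsto_atTop_ciInf hanti hbdd
  have hL0 : 0 ≤ ⨅ n, a n := le_ciInf hnn
  have hLe : (⨅ n, a n) = 0 := by
    by_contra hne
    have hLpos : 0 < ⨅ n, a n := lt_of_le_of_ne hL0 (Ne.symm hne)
    have hlt : (⨅ n, a n) < 4/3 * ⨅ n, a n := by linarith
    obtain ⟨N, hN⟩ := (htend.eventually_lt_const hlt).exists_forall_of_atTop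
    obtain ⟨n, hnN, p1, p2⟩ := Stmt8Aux.exists_pattern i h0 h1 N
    have h2 : a (n+2) ≤ 3/4 * a n := Stmt8Aux.contract i n p1 p2
    have h3 : (⨅ n, a n) ≤ a (n+2) := ciInf_le hbdd _
    have h4 : a n < 4/3 * ⨅ n, a n := hN n hnN
    linarith
  have htend0 : Tendsto a atTop (nhds 0) := hLe ▸ htend
  refine ⟨htend0, ?_⟩
  obtain ⟨pt, hpt⟩ :=
    IsCompact.nonempty_iInter_of_sequence_nonempty_isCompact_isClosed
      (fun n => subTriE Ge1212 i (n+1)) (fun n => hsub (n+1))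
      (fun n => Stmt8Aux.nonempty_subTri i (n+1))
      (Stmt8Aux.isCompact_subTri i 1)
      (fun n => (Stmt8Aux.isCompact_subTri i (n+1)).isClosed)
  refine ⟨pt, Set.eq_singleton_iff_unique_mem.mpr ⟨hpt, ?_⟩⟩
  intro x hx
  have hdist : ∀ n, dist x pt ≤ a (n+1) := fun n =>
    Metric.dist_le_diam_of_mem (Stmt8Aux.isCompact_subTri i (n+1)).isBounded
      (Set.mem_iInter.1 hx n) (Set.mem_iInter.1 hpt n)
  have htend1 : Tendsto (fun n => a (n+1)) atTop (nhds 0) :=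
    htend0.comp (tendsto_add_atTop_nat 1)
  have hd0 : dist x pt ≤ 0 := ge_of_tendsto' htend1 hdist
  have := dist_nonneg (x := x) (y := pt)
  exact dist_le_zero.mp hd0
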